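/- Let O be an n×n complex Hermitian matrix with eigenvalues λ_1,…,λ_n (with multiplicity) and corresponding orthonormal eigenvector basis v_1,…,v_n (as given by the spectral theorem), and let ρ be an n×n density matrix. For each i set p_i = Re⟨v_i, ρ·v_i⟩, so that each p_i ≥ 0 and Σ_i p_i = 1; the set S = {i : p_i > 0} is nonempty. Then the quantum tilted loss γ ↦ (1/γ)·log(Re Tr(exp(γ•O)·ρ)) tends to max_{i ∈ S} λ_i as γ → +∞, and tends to min_{i ∈ S} λ_i as γ → −∞. -/

import Mathlib

open Matrix Filter NormedSpace ComplexOrder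



lemma qtl_aux {n : ℕ} (p lam : Fin n → ℝ) (hp : ∀ i, 0 ≤ p i)
    (hS : ∃ i, 0 < p i) :
    Tendsto (fun γ : ℝ => (1 / γ) * Real.log (∑ i, p i * Real.exp (γ * lam i)))
      atTop (nhds (sSup (lam '' {i | 0 < p i}))) := by
  set M := sSup (lam '' {i | 0 < p i}) with hM
  have hfin : (lam '' {i | 0 < p i}).Finite := Set.toFinite _
  have hne : (lam '' {i | 0 < p i}).Nonempty := by
    obtain ⟨i, hi⟩ := hS; exact ⟨lam i, ⟨i, hi, rfl⟩⟩
  obtain ⟨i0, hi0, hlam0⟩ := hne.csSup_mem hfin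
  have hle : ∀ i, 0 < p i → lam i ≤ M := fun i hi => le_csSup hfin.bddAbove ⟨i, hi, rfl⟩
  have hsumpos : ∀ γ : ℝ, 0 < ∑ i, p i * Real.exp (γ * lam i) := by
    intro γ
    refine Finset.sum_pos' (fun i _ => mul_nonneg (hp i) (Real.exp_pos _).le)
      ⟨i0, Finset.mem_univ _, mul_pos hi0 (Real.exp_pos _)⟩
  have hPpos : 0 < ∑ i, p i :=
    Finset.sum_pos' (fun i _ => hp i) ⟨i0, Finset.mem_univ _, hi0⟩
  have hlow : ∀ γ : ℝ, p i0 * Real.exp (γ * M) ≤ ∑ i, p i * Real.exp (γ * lam i) := by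
    intro γ
    rw [hM, ← hlam0]
    exact Finset.single_le_sum (f := fun i => p i * Real.exp (γ * lam i)) (fun i _ => mul_nonneg (hp i) (Real.exp_pos _).le)
      (Finset.mem_univ i0)
  have hup : ∀ γ : ℝ, 0 ≤ γ →
      (∑ i, p i * Real.exp (γ * lam i)) ≤ (∑ i, p i) * Real.exp (γ * M) := by
    intro γ hγ
    rw [Finset.sum_mul]
    refine Finset.sum_le_sum fun i _ => ?_
    by_cases h : 0 < p i
    · exact mul_le_mul_of_nonneg_left
        (Real.exp_le_exp.2 (mul_le_mul_of_nonneg_left (hle i h) hγ)) (hp i)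
    · have : p i = 0 := le_antisymm (not_lt.1 h) (hp i)
      simp [this]
  have hfb : ∀ γ : ℝ, 0 < γ →
      M + Real.log (p i0) / γ ≤ (1 / γ) * Real.log (∑ i, p i * Real.exp (γ * lam i)) ∧
      (1 / γ) * Real.log (∑ i, p i * Real.exp (γ * lam i)) ≤ M + Real.log (∑ i, p i) / γ := by
    intro γ hγ
    constructor
    · have h1 : Real.log (p i0) + γ * M ≤ Real.log (∑ i, p i * Real.exp (γ * lam i)) := by
        have := Real.log_le_log (mul_pos hi0 (Real.exp_pos _)) (hlow γ)
        rwa [Real.log_mul (ne_of_gt hi0) (Real.exp_ne_zero _), Real.log_exp] at this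
      have h2 : (1 / γ) * (Real.log (p i0) + γ * M) ≤
          (1 / γ) * Real.log (∑ i, p i * Real.exp (γ * lam i)) :=
        mul_le_mul_of_nonneg_left h1 (by positivity)
      calc M + Real.log (p i0) / γ = (1 / γ) * (Real.log (p i0) + γ * M) := by
            field_simp; ring
        _ ≤ _ := h2
    · have h1 : Real.log (∑ i, p i * Real.exp (γ * lam i)) ≤ Real.log (∑ i, p i) + γ * M := by
        have := Real.log_le_log (hsumpos γ) (hup γ hγ.le)
        rwa [Real.log_mul (ne_of_gt hPpos) (Real.exp_ne_zero _), Real.log_exp] at this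
      have h2 : (1 / γ) * Real.log (∑ i, p i * Real.exp (γ * lam i)) ≤
          (1 / γ) * (Real.log (∑ i, p i) + γ * M) :=
        mul_le_mul_of_nonneg_left h1 (by positivity)
      calc _ ≤ (1 / γ) * (Real.log (∑ i, p i) + γ * M) := h2
        _ = M + Real.log (∑ i, p i) / γ := by field_simp; ring
  have hd1 : Tendsto (fun γ : ℝ => Real.log (p i0) / γ) atTop (nhds 0) :=
    Tendsto.div_atTop tendsto_const_nhds tendsto_id
  have hd2 : Tendsto (fun γ : ℝ => Real.log (∑ i, p i) / γ) atTop (nhds 0) :=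
    Tendsto.div_atTop tendsto_const_nhds tendsto_id
  have hlim1 : Tendsto (fun γ : ℝ => M + Real.log (p i0) / γ) atTop (nhds M) := by
    simpa using (tendsto_const_nhds (x := M) (f := atTop)).add hd1
  have hlim2 : Tendsto (fun γ : ℝ => M + Real.log (∑ i, p i) / γ) atTop (nhds M) := by
    simpa using (tendsto_const_nhds (x := M) (f := atTop)).add hd2
  refine tendsto_of_tendsto_of_tendsto_of_le_of_le' hlim1 hlim2 ?_ ?_
  · filter_upwards [eventually_gt_atTop 0] with γ hγ using (hfb γ hγ).1
  · filter_upwards [eventually_gt_atTop 0] with γ hγ using (hfb γ hγ).2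



theorem qtl_limits_at_infinity (n : ℕ) (hn : 0 < n)
    (O ρ : Matrix (Fin n) (Fin n) ℂ)
    (hO : O.IsHermitian) (hρ : ρ.PosSemidef) (hρtr : ρ.trace = 1)
    (lam : Fin n → ℝ) (v : Fin n → (Fin n → ℂ))
    (heig : ∀ i, O.mulVec (v i) = (lam i : ℂ) • v i)
    (horth : ∀ i j, star (v i) ⬝ᵥ v j = if i = j then 1 else 0) :
    Tendsto (fun γ : ℝ => (1 / γ) * Real.log ((NormedSpace.exp (γ • O) * ρ).trace.re))
        atTop
        (nhds (sSup (lam '' {i | 0 < (star (v i) ⬝ᵥ ρ.mulVec (v i)).re}))) ∧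
    Tendsto (fun γ : ℝ => (1 / γ) * Real.log ((NormedSpace.exp (γ • O) * ρ).trace.re))
        atBot
        (nhds (sInf (lam '' {i | 0 < (star (v i) ⬝ᵥ ρ.mulVec (v i)).re}))) := by
  classical
  set p : Fin n → ℝ := fun i => (star (v i) ⬝ᵥ ρ.mulVec (v i)).re with hp_def
  set U : Matrix (Fin n) (Fin n) ℂ := Matrix.of (fun k i => v i k) with hU_def
  have hUU : Uᴴ * U = 1 := by
    ext i j
    have h := horth i j
    simp only [dotProduct, Pi.star_apply] at h
    simpa [Matrix.mul_apply, Matrix.conjTranspose_apply, Matrix.one_apply, hU_def] using h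
  have hU'U : U * Uᴴ = 1 := mul_eq_one_comm.mp hUU
  have hUnit : IsUnit U := ⟨⟨U, Uᴴ, hU'U, hUU⟩, rfl⟩
  have hUinv : U⁻¹ = Uᴴ := Matrix.inv_eq_right_inv hU'U
  have hOU : O * U = U * Matrix.diagonal (fun i => (lam i : ℂ)) := by
    ext k j
    have h := congrFun (heig j) k
    simp only [Matrix.mulVec, dotProduct, Pi.smul_apply, smul_eq_mul] at h
    rw [Matrix.mul_diagonal]
    simp only [Matrix.mul_apply, hU_def, Matrix.of_apply]
    rw [h]; ring
  have hO_eq : O = U * Matrix.diagonal (fun i => (lam i : ℂ)) * Uᴴ := by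
    calc O = O * (U * Uᴴ) := by rw [hU'U, mul_one]
      _ = (O * U) * Uᴴ := by rw [mul_assoc]
      _ = _ := by rw [hOU]
  have hquad : ∀ i, (Uᴴ * ρ * U) i i = star (v i) ⬝ᵥ ρ.mulVec (v i) := by
    intro i
    rw [mul_assoc, Matrix.mul_apply, dotProduct]
    refine Finset.sum_congr rfl fun k _ => ?_
    simp [Matrix.mul_apply, Matrix.mulVec, dotProduct, Matrix.conjTranspose_apply,
      hU_def, Pi.star_apply]
  have hexp : ∀ γ : ℝ, NormedSpace.exp (γ • O)
      = U * Matrix.diagonal (fun i => Complex.exp ((γ * lam i : ℝ) : ℂ)) * Uᴴ := by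
    intro γ
    have hsmul0 : γ • O = (γ : ℂ) • O := by
      ext k j; simp [Complex.real_smul]
    have hDs : (γ : ℂ) • Matrix.diagonal (fun i => (lam i : ℂ))
        = Matrix.diagonal (fun i => ((γ * lam i : ℝ) : ℂ)) := by
      ext i j
      by_cases h : i = j <;> simp [Matrix.diagonal_apply, h] <;> push_cast <;> ring
    have hsm : γ • O = U * Matrix.diagonal (fun i => ((γ * lam i : ℝ) : ℂ)) * U⁻¹ := by
      rw [hsmul0, hO_eq, hUinv, ← hDs, mul_smul_comm, smul_mul_assoc]
    rw [hsm, Matrix.exp_conj U _ hUnit, hUinv]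
    congr 2
    rw [Matrix.exp_diagonal, Pi.exp_def, ← Complex.exp_eq_exp_ℂ]
  have htr : ∀ γ : ℝ, (NormedSpace.exp (γ • O) * ρ).trace
      = ∑ i, (star (v i) ⬝ᵥ ρ.mulVec (v i)) * Complex.exp ((γ * lam i : ℝ) : ℂ) := by
    intro γ
    rw [hexp γ, mul_assoc, trace_mul_comm, ← mul_assoc]
    unfold Matrix.trace
    refine Finset.sum_congr rfl fun i _ => ?_
    rw [Matrix.diag_apply, Matrix.mul_diagonal, hquad]
  have hre : ∀ γ : ℝ, ((NormedSpace.exp (γ • O) * ρ).trace).re = ∑ i, p i * Real.exp (γ * lam i) := by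
    intro γ
    rw [htr γ, Complex.re_sum]
    refine Finset.sum_congr rfl fun i _ => ?_
    rw [← Complex.ofReal_exp, Complex.mul_re, Complex.ofReal_re, Complex.ofReal_im]
    simp only [hp_def, mul_zero, sub_zero]
  have hp_nonneg : ∀ i, 0 ≤ p i := by
    intro i
    have h := hρ.dotProduct_mulVec_nonneg (v i)
    simpa [hp_def] using (Complex.le_def.mp h).1
  have hsumc : (∑ i, (star (v i) ⬝ᵥ ρ.mulVec (v i))) = 1 := by
    have h1 : (∑ i, (star (v i) ⬝ᵥ ρ.mulVec (v i))) = (Uᴴ * ρ * U).trace := by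
      rw [Matrix.trace]
      exact Finset.sum_congr rfl fun i _ => (hquad i).symm
    rw [h1, trace_mul_cycle, hU'U, one_mul, hρtr]
  have hsum1 : ∑ i, p i = 1 := by
    have h := congrArg Complex.re hsumc
    rw [Complex.re_sum] at h
    simpa [hp_def] using h
  have hS : ∃ i, 0 < p i := by
    by_contra h
    push_neg at h
    have : ∑ i, p i = 0 := Finset.sum_eq_zero fun i _ =>
      le_antisymm (h i) (hp_nonneg i)
    rw [hsum1] at this
    norm_num at this
  constructor
  · have hT := qtl_aux p lam hp_nonneg hS
    exact hT.congr fun γ => by rw [hre γ]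
  · have hT2 := qtl_aux p (fun i => -lam i) hp_nonneg hS
    have hT3 : Tendsto
        (fun γ : ℝ => -((1 / (-γ)) * Real.log (∑ i, p i * Real.exp ((-γ) * (-lam i)))))
        atBot (nhds (-(sSup ((fun i => -lam i) '' {i | 0 < p i})))) :=
      (hT2.comp tendsto_neg_atBot_atTop).neg
    have hnegset : -(sSup ((fun i => -lam i) '' {i | 0 < p i}))
        = sInf (lam '' {i | 0 < p i}) := by
      rw [Real.sInf_def, neg_inj]
      congr 1
      ext x
      simp only [Set.mem_image, Set.mem_neg, Set.mem_setOf_eq]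
      constructor
      · rintro ⟨i, hi, rfl⟩; exact ⟨i, hi, by ring⟩
      · rintro ⟨i, hi, hx⟩; exact ⟨i, hi, by linarith⟩
    rw [hnegset] at hT3
    exact hT3.congr fun γ => by
      rw [hre γ]
      simp only [neg_mul_neg]
      rw [one_div, one_div, inv_neg]
      ring
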